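/- Let n ∈ ℕ and let Δ₊≤n be the wide subcategory of the n-truncated simplex category whose morphisms are the monomorphisms. For every w : Fin (n+1) → Bool, the assignment declaring a sieve S on [k] to be covering if and only if every morphism f : [l] ⟶ [k] with w l = false belongs to S, defines a Grothendieck topology J_w on Δ₊≤n; moreover the map w ↦ J_w is a bijection from Fin (n+1) → Bool onto the set of all Grothendieck topologies on Δ₊≤n. In particular Δ₊≤n carries exactly 2^(n+1) Grothendieck topologies. -/

import Mathlib

open CategoryTheory Simplicial Opposite

/-- The `n`-truncated semi-simplex category: the wide subcategory of the `n`-truncated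
simplex category whose morphisms are the monomorphisms. -/
abbrev TruncSemiSimplexCat (n : ℕ) : Type :=
  WideSubcategory (MorphismProperty.monomorphisms (SimplexCategory.Truncated n))

namespace Stmt3Aux

variable {n : ℕ}

/-- dimension of an object -/
def dim (X : TruncSemiSimplexCat n) : ℕ := X.obj.obj.len

/-- dimension as elt of Fin (n+1) -/
def fdim (X : TruncSemiSimplexCat n) : Fin (n + 1) :=
  ⟨X.obj.obj.len, Nat.lt_succ_of_le X.obj.property⟩

/-- the object of dimension l -/
def objOf (l : Fin (n + 1)) : TruncSemiSimplexCat n :=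
  ⟨⟨SimplexCategory.mk l.1, by simpa [SimplexCategory.len_mk] using Nat.lt_succ_iff.mp l.2⟩⟩

lemma obj_eq_of_dim_eq {X Y : TruncSemiSimplexCat n} (h : dim X = dim Y) : X = Y := by
  obtain ⟨⟨x, hx⟩⟩ := X
  obtain ⟨⟨y, hy⟩⟩ := Y
  congr 1
  have : x = y := SimplexCategory.ext h
  subst this
  rfl

lemma objOf_fdim (X : TruncSemiSimplexCat n) : objOf (fdim X) = X :=
  obj_eq_of_dim_eq (by simp [dim, objOf, fdim, SimplexCategory.len_mk])

lemma underlying_mono {X Y : TruncSemiSimplexCat n} (f : X ⟶ Y) :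
    Mono (show X.obj.obj ⟶ Y.obj.obj from f.hom.hom) := by
  rw [SimplexCategory.mono_iff_injective]
  intro i j hij
  set Z : TruncSemiSimplexCat n := ⟨⟨SimplexCategory.mk 0, by simp [SimplexCategory.len_mk]⟩⟩ with hZ
  have hconst : ∀ k : Fin (X.obj.obj.len + 1),
      MorphismProperty.monomorphisms (SimplexCategory.Truncated n)
        (show Z.obj ⟶ X.obj from ObjectProperty.homMk (SimplexCategory.const (SimplexCategory.mk 0) X.obj.obj k)) := by
    intro k
    have hm : Mono (SimplexCategory.const (SimplexCategory.mk 0) X.obj.obj k) := by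
      rw [SimplexCategory.mono_iff_injective]
      intro a b _
      exact @Subsingleton.elim _
        ((SimplexCategory.len_mk 0) ▸ ((⟨fun a b => Fin.ext (by omega)⟩ : Subsingleton (Fin (0 + 1))))) a b
    exact (ObjectProperty.ι _).mono_of_mono_map hm
  let gi : Z ⟶ X := ⟨ObjectProperty.homMk (SimplexCategory.const _ _ i), hconst i⟩
  let gj : Z ⟶ X := ⟨ObjectProperty.homMk (SimplexCategory.const _ _ j), hconst j⟩
  have hcomp : gi ≫ f = gj ≫ f := by
    apply WideSubcategory.hom_ext
    apply ObjectProperty.hom_ext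
    show SimplexCategory.const _ _ i ≫ f.hom.hom
        = SimplexCategory.const _ _ j ≫ f.hom.hom
    rw [SimplexCategory.const_comp, SimplexCategory.const_comp]
    exact congrArg _ hij
  haveI : Mono (f.1 : X.obj ⟶ Y.obj) := f.2
  have h2 : gi.1 = gj.1 := (cancel_mono f.1).mp (congrArg (fun g => g.hom) hcomp)
  have h3 := congrArg (fun (g : Z.obj ⟶ X.obj)
    => g.hom.toOrderHom ⟨0, Nat.succ_pos _⟩) h2
  exact h3

lemma dim_le {X Y : TruncSemiSimplexCat n} (f : X ⟶ Y) : dim X ≤ dim Y :=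
  @SimplexCategory.len_le_of_mono _ _ f.hom.hom (underlying_mono f)

lemma endo_eq_id {X : TruncSemiSimplexCat n} (f : X ⟶ X) : f = 𝟙 X := by
  haveI := underlying_mono f
  have h : (show X.obj.obj ⟶ X.obj.obj from f.hom.hom) = 𝟙 _ := SimplexCategory.eq_id_of_mono _
  exact WideSubcategory.hom_ext _ (ObjectProperty.hom_ext _ h)

/-- the boundary sieve -/
def bd (X : TruncSemiSimplexCat n) : Sieve X where
  arrows Y f := dim Y < dim X
  downward_closed := fun {Y Z f} hf g => lt_of_le_of_lt (dim_le g) hf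

lemma lt_of_not_id_mem {X : TruncSemiSimplexCat n} (S : Sieve X) (h : ¬ S.arrows (𝟙 X))
    {Y : TruncSemiSimplexCat n} (f : Y ⟶ X) (hf : S.arrows f) : dim Y < dim X := by
  rcases lt_or_eq_of_le (dim_le f) with h' | h'
  · exact h'
  · exfalso
    have := obj_eq_of_dim_eq h'
    subst this
    rw [endo_eq_id f] at hf
    exact h hf

/-- the topology associated to w -/
def Jw (w : Fin (n + 1) → Bool) : GrothendieckTopology (TruncSemiSimplexCat n) where
  sieves X := {S | ∀ (Y : TruncSemiSimplexCat n) (f : Y ⟶ X), w (fdim Y) = false → S.arrows f}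
  top_mem' := fun X Y f _ => trivial
  pullback_stable' := fun X Y S f hS Z g hg => hS Z (g ≫ f) hg
  transitive' := fun X S hS R hR Y f hf => by
    have h1 := hR (hS Y f hf) Y (𝟙 Y) hf
    simpa using h1

lemma mem_Jw_iff (w : Fin (n + 1) → Bool) (X : TruncSemiSimplexCat n) (S : Sieve X) :
    S ∈ Jw w X ↔ ∀ (Y : TruncSemiSimplexCat n) (f : Y ⟶ X),
      w (fdim Y) = false → S.arrows f := Iff.rfl

lemma bd_mem_Jw_iff (w : Fin (n + 1) → Bool) (X : TruncSemiSimplexCat n) :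
    bd X ∈ Jw w X ↔ w (fdim X) = true := by
  constructor
  · intro h
    by_contra hw
    have := h X (𝟙 X) (by simpa using hw)
    exact lt_irrefl _ this
  · intro h Y f hf
    rcases lt_or_eq_of_le (dim_le f) with h' | h'
    · exact h'
    · exfalso
      have : fdim Y = fdim X := Fin.ext h'
      rw [this, h] at hf
      simp at hf

noncomputable def wOf (J : GrothendieckTopology (TruncSemiSimplexCat n)) (l : Fin (n + 1)) :
    Bool :=
  @decide (bd (objOf l) ∈ J (objOf l)) (Classical.propDecidable _)

lemma wOf_eq_false_iff (J : GrothendieckTopology (TruncSemiSimplexCat n))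
    (X : TruncSemiSimplexCat n) : wOf J (fdim X) = false ↔ bd X ∉ J X := by
  unfold wOf
  rw [objOf_fdim]
  exact decide_eq_false_iff_not

lemma Jw_le (J : GrothendieckTopology (TruncSemiSimplexCat n)) (X : TruncSemiSimplexCat n)
    (S : Sieve X) (hS : S ∈ Jw (wOf J) X) : S ∈ J X := by
  suffices h : ∀ (k : ℕ) (X : TruncSemiSimplexCat n), dim X = k → ∀ S : Sieve X,
      S ∈ Jw (wOf J) X → S ∈ J X from h (dim X) X rfl S hS
  intro k
  induction k using Nat.strong_induction_on with
  | _ k IH =>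
    intro X hX S hS
    by_cases hb : bd X ∈ J X
    · refine J.transitive hb S ?_
      intro Y f hf
      exact IH (dim Y) (hX ▸ hf) Y rfl (S.pullback f)
        (fun Z g hg => hS Z (g ≫ f) hg)
    · have hw : wOf J (fdim X) = false := (wOf_eq_false_iff J X).mpr hb
      have hid : S.arrows (𝟙 X) := hS X (𝟙 X) hw
      rw [Sieve.id_mem_iff_eq_top] at hid
      rw [hid]
      exact J.top_mem X

lemma le_Jw (J : GrothendieckTopology (TruncSemiSimplexCat n)) (X : TruncSemiSimplexCat n)
    (S : Sieve X) (hS : S ∈ J X) : S ∈ Jw (wOf J) X := by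
  intro Y f hf
  rw [wOf_eq_false_iff] at hf
  have hp : S.pullback f ∈ J Y := J.pullback_stable f hS
  by_cases hid : (S.pullback f).arrows (𝟙 Y)
  · simpa using hid
  · exfalso
    apply hf
    refine J.superset_covering ?_ hp
    intro Z g hg
    exact lt_of_not_id_mem _ hid g hg

end Stmt3Aux

open Stmt3Aux in
theorem stmt3 (n : ℕ) :
    ∃ T : (Fin (n + 1) → Bool) → GrothendieckTopology (TruncSemiSimplexCat n),
      (∀ (w : Fin (n + 1) → Bool) (X : TruncSemiSimplexCat n) (S : Sieve X),
        S ∈ T w X ↔ ∀ (Y : TruncSemiSimplexCat n) (f : Y ⟶ X),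
          w ⟨Y.obj.obj.len, Nat.lt_succ_of_le Y.obj.property⟩ = false → S.arrows f) ∧
      Function.Bijective T ∧
      Nat.card (GrothendieckTopology (TruncSemiSimplexCat n)) = 2 ^ (n + 1) := by
  have hbij : Function.Bijective (Jw (n := n)) := by
    constructor
    · intro w w' h
      funext l
      have h1 : bd (objOf l) ∈ Jw w (objOf l) ↔ bd (objOf l) ∈ Jw w' (objOf l) := by rw [h]
      rw [bd_mem_Jw_iff, bd_mem_Jw_iff] at h1
      have hl : fdim (objOf (n := n) l) = l := by
        apply Fin.ext
        simp [fdim, objOf, SimplexCategory.len_mk]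
      rw [hl] at h1
      rcases Bool.dichotomy (w l) with hw | hw <;> rcases Bool.dichotomy (w' l) with hw' | hw' <;>
        simp_all
    · intro J
      refine ⟨wOf J, ?_⟩
      apply GrothendieckTopology.ext
      funext X
      ext S
      exact ⟨fun h => Jw_le J X S h, fun h => le_Jw J X S h⟩
  refine ⟨Jw, fun w X S => Iff.rfl, hbij, ?_⟩
  rw [← Nat.card_eq_of_bijective _ hbij]
  simp [Nat.card_eq_fintype_card]
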